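/- arXiv:1901.05535 — 3 statements merged into one kernel-verified Lean document; each statement's English description precedes it below -/
import Mathlib

section
/- The function t ↦ t^(-2)(1 - cos t) is monotonically decreasing on the interval (0, π): for all 0 < t₁ < t₂ < π, one has t₁^(-2)(1 - cos t₁) ≥ t₂^(-2)(1 - cos t₂). -/
open Real

lemma aux_sin_ratio {u v : ℝ} (ha : 0 < u) (hab : u < v) (hb : v ≤ Real.pi) :
    (u / v) * Real.sin v ≤ Real.sin u := by
  have hb0 : 0 < v := ha.trans hab
  have huv : u / v ≤ 1 := (div_le_one hb0).2 hab.le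
  have h : (1 - u / v) • Real.sin 0 + (u / v) • Real.sin v ≤
      Real.sin ((1 - u / v) • (0 : ℝ) + (u / v) • v) :=
    strictConcaveOn_sin_Icc.concaveOn.2
      (Set.mem_Icc.2 ⟨le_refl 0, Real.pi_pos.le⟩)
      (Set.mem_Icc.2 ⟨hb0.le, hb⟩)
      (by linarith) (by positivity) (by ring)
  simp only [smul_eq_mul, Real.sin_zero, mul_zero, zero_add] at h
  have hba : (1 - u / v) * 0 + u / v * v = u := by field_simp; ring
  calc (u / v) * Real.sin v = (1 - u / v) * 0 + u / v * Real.sin v := by ring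
    _ ≤ Real.sin ((1 - u / v) * 0 + u / v * v) := by simpa using h
    _ = Real.sin u := by rw [hba]

/-- The function `t ↦ t^(-2) (1 - cos t)` is monotonically decreasing on `(0, π)`. -/
theorem stmt_2 (t₁ t₂ : ℝ) (h₁ : 0 < t₁) (h₁₂ : t₁ < t₂) (h₂ : t₂ < Real.pi) :
    t₂ ^ (-2 : ℝ) * (1 - Real.cos t₂) ≤ t₁ ^ (-2 : ℝ) * (1 - Real.cos t₁) := by
  have h₂0 : 0 < t₂ := h₁.trans h₁₂
  have hr : ∀ t : ℝ, 0 < t → t ^ (-2 : ℝ) = (t ^ 2)⁻¹ := by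
    intro t ht
    rw [Real.rpow_neg ht.le, show ((2:ℝ) = ((2:ℕ):ℝ)) by norm_num,
      Real.rpow_natCast]
  rw [hr t₁ h₁, hr t₂ h₂0]
  -- key: t₁ * sin (t₂/2) ≤ t₂ * sin (t₁/2)
  have key := aux_sin_ratio (u := t₁ / 2) (v := t₂ / 2) (by linarith) (by linarith)
    (by linarith [Real.pi_pos])
  have hdiv : t₁ / 2 / (t₂ / 2) = t₁ / t₂ := by
    field_simp
  rw [hdiv] at key
  have hs1 : 0 ≤ Real.sin (t₁ / 2) := Real.sin_nonneg_of_nonneg_of_le_pi (by linarith)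
    (by linarith [Real.pi_pos])
  have hs2 : 0 ≤ Real.sin (t₂ / 2) := Real.sin_nonneg_of_nonneg_of_le_pi (by linarith)
    (by linarith)
  have key2 : t₁ * Real.sin (t₂ / 2) ≤ t₂ * Real.sin (t₁ / 2) := by
    have := mul_le_mul_of_nonneg_left key h₂0.le
    calc t₁ * Real.sin (t₂ / 2) = t₂ * (t₁ / t₂ * Real.sin (t₂ / 2)) := by
          field_simp
      _ ≤ t₂ * Real.sin (t₁ / 2) := this
  have hgen : ∀ s : ℝ, 1 - Real.cos (2 * s) = 2 * Real.sin s ^ 2 := by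
    intro s
    rw [Real.cos_two_mul, Real.cos_sq']
    ring
  have hc1 := hgen (t₁ / 2)
  have hc2 := hgen (t₂ / 2)
  rw [show 2 * (t₁ / 2) = t₁ by ring] at hc1
  rw [show 2 * (t₂ / 2) = t₂ by ring] at hc2
  rw [hc1, hc2, inv_mul_eq_div, inv_mul_eq_div,
    div_le_div_iff₀ (by positivity) (by positivity)]
  nlinarith [mul_le_mul key2 key2 (by positivity : (0:ℝ) ≤ t₁ * Real.sin (t₂/2))
    (by positivity : (0:ℝ) ≤ t₂ * Real.sin (t₁/2))]
end

section
/- Let H and U be separable real Hilbert spaces, 𝕌 ⊆ U an orthonormal basis, r ∈ (0,∞), T a continuous bilinear form on H, A a Schatten-(1+r) operator from U to H, and B a Schatten-(1+1/r) operator from U to H. Then Σ_{u ∈ 𝕌} |T(Au, Bu)| ≤ ‖T‖ · ‖A‖_{S_{1+r}} · ‖B‖_{S_{1+1/r}}, where ‖T‖ is the operator norm of the bilinear form and ‖·‖_{S_p} denotes the Schatten-p norm. -/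
open scoped RealInnerProductSpace ENNReal

/-- The Schatten-`p` norm of a continuous linear operator between real Hilbert spaces,
defined through the variational characterisation
`‖A‖_{S_p} = sup (Σᵢ |⟪A eᵢ, fᵢ⟫|^p)^{1/p}`, the supremum being taken over all finite
orthonormal families `(eᵢ)` in `U` and `(fᵢ)` in `H`. -/
noncomputable def schattenNorm {U H : Type*}
    [NormedAddCommGroup U] [InnerProductSpace ℝ U]
    [NormedAddCommGroup H] [InnerProductSpace ℝ H]
    (p : ℝ) (A : U →L[ℝ] H) : ℝ≥0∞ :=
  ⨆ (n : ℕ) (e : Fin n → U) (f : Fin n → H) (_ : Orthonormal ℝ e) (_ : Orthonormal ℝ f),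
    ENNReal.ofReal ((∑ i, |⟪A (e i), f i⟫| ^ p) ^ (1 / p))


namespace SchattenAux

variable {U H : Type*}
    [NormedAddCommGroup U] [InnerProductSpace ℝ U]
    [NormedAddCommGroup H] [InnerProductSpace ℝ H]

lemma pseudo_bessel {n : ℕ} (w : Fin n → H)
    (horth : ∀ a b, a ≠ b → ⟪w a, w b⟫ = 0) (hnorm : ∀ a, ‖w a‖ ≤ 1) (z : H) :
    ∑ a, ⟪z, w a⟫ ^ 2 ≤ ‖z‖ ^ 2 := by
  set S := ∑ a, ⟪z, w a⟫ • w a with hS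
  have e1 : ⟪z, S⟫ = ∑ a, ⟪z, w a⟫ ^ 2 := by
    rw [hS, inner_sum]
    exact Finset.sum_congr rfl fun a _ => by rw [real_inner_smul_right]; ring
  have e2 : ⟪S, S⟫ ≤ ∑ a, ⟪z, w a⟫ ^ 2 := by
    rw [hS, sum_inner]
    refine Finset.sum_le_sum fun a _ => ?_
    have hwa : ⟪w a, ∑ b, ⟪z, w b⟫ • w b⟫ = ⟪z, w a⟫ * ⟪w a, w a⟫ := by
      rw [inner_sum]
      rw [Finset.sum_eq_single a]
      · rw [real_inner_smul_right]
      · intro b _ hb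
        rw [real_inner_smul_right, horth a b (Ne.symm hb), mul_zero]
      · simp
    rw [real_inner_smul_left, hwa]
    have h1 : ⟪w a, w a⟫ ≤ 1 := by
      rw [real_inner_self_eq_norm_sq]
      calc ‖w a‖ ^ 2 ≤ 1 ^ 2 := by
            apply pow_le_pow_left₀ (norm_nonneg _) (hnorm a)
        _ = 1 := one_pow 2
    have h2 : (0:ℝ) ≤ ⟪z, w a⟫ ^ 2 := sq_nonneg _
    nlinarith
  have e3 : (0:ℝ) ≤ ⟪z - S, z - S⟫ := real_inner_self_nonneg
  rw [inner_sub_left, inner_sub_right, inner_sub_right] at e3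
  have e4 : ⟪S, z⟫ = ⟪z, S⟫ := real_inner_comm _ _
  have e5 : ⟪z, z⟫ = ‖z‖ ^ 2 := real_inner_self_eq_norm_sq z
  linarith

lemma le_schattenNorm (p : ℝ) (A : U →L[ℝ] H) {n : ℕ} (e : Fin n → U) (f : Fin n → H)
    (he : Orthonormal ℝ e) (hf : Orthonormal ℝ f) :
    ENNReal.ofReal ((∑ i, |⟪A (e i), f i⟫| ^ p) ^ (1 / p)) ≤ schattenNorm p A :=
  le_iSup_of_le n <| le_iSup_of_le e <| le_iSup_of_le f <| le_iSup_of_le he <|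
    le_iSup_of_le hf le_rfl

lemma side_bound {p : ℝ} (hp : 0 < p) (A : U →L[ℝ] H) {n : ℕ}
    (e : Fin n → U) (he : Orthonormal ℝ e)
    (α : Fin n → ℝ) (ψ : Fin n → H) (hα : ∀ a, 0 ≤ α a)
    (hAe : ∀ a, A (e a) = α a • ψ a)
    (hψ : ∀ a c, ⟪ψ a, ψ c⟫ = if a = c then (if α a = 0 then 0 else 1) else 0) :
    ENNReal.ofReal ((∑ a, α a ^ p) ^ (1 / p)) ≤ schattenNorm p A := by
  classical
  set s : Finset (Fin n) := Finset.univ.filter fun a => α a ≠ 0 with hs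
  set j : Fin s.card → Fin n := fun i => (s.equivFin.symm i : Fin n) with hj
  have hj_mem : ∀ i, j i ∈ s := fun i => (s.equivFin.symm i).2
  have hj_ne : ∀ i, α (j i) ≠ 0 := by
    intro i
    have := hj_mem i
    rw [hs, Finset.mem_filter] at this
    exact this.2
  have hj_inj : Function.Injective j :=
    Subtype.val_injective.comp s.equivFin.symm.injective
  have he' : Orthonormal ℝ (e ∘ j) := he.comp j hj_inj
  have hf' : Orthonormal ℝ (ψ ∘ j) := by
    rw [orthonormal_iff_ite]
    intro i i'
    simp only [Function.comp_apply, hψ, hj_inj.eq_iff]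
    by_cases h : i = i'
    · simp [h, hj_ne i']
    · simp [h]
  have hval : ∀ i, |⟪A (e (j i)), ψ (j i)⟫| = α (j i) := by
    intro i
    rw [hAe, real_inner_smul_left, hψ]
    simp [hj_ne i, abs_of_nonneg (hα _)]
  have hsum : ∑ i, |⟪A ((e ∘ j) i), (ψ ∘ j) i⟫| ^ p = ∑ a, α a ^ p := by
    simp only [Function.comp_apply]
    calc ∑ i, |⟪A (e (j i)), ψ (j i)⟫| ^ p = ∑ i, α (j i) ^ p := by
          exact Finset.sum_congr rfl fun i _ => by rw [hval]
      _ = ∑ a ∈ s, α a ^ p := by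
          rw [← Finset.sum_coe_sort s (fun a => α a ^ p)]
          exact Equiv.sum_comp s.equivFin.symm fun x => α (x : Fin n) ^ p
      _ = ∑ a, α a ^ p := by
          apply Finset.sum_subset (Finset.subset_univ s)
          intro a _ ha
          rw [hs, Finset.mem_filter, not_and, not_not] at ha
          rw [ha (Finset.mem_univ a), Real.zero_rpow hp.ne']
  have := le_schattenNorm p A (e ∘ j) (ψ ∘ j) he' hf'
  rwa [hsum] at this

noncomputable def mkL {n : ℕ} (v : Fin n → H) : EuclideanSpace ℝ (Fin n) →ₗ[ℝ] H where
  toFun c := ∑ k, c k • v k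
  map_add' c d := by
    simp [add_smul, Finset.sum_add_distrib]
  map_smul' t c := by
    simp [smul_smul, Finset.smul_sum]

@[simp] lemma mkL_apply {n : ℕ} (v : Fin n → H) (c : EuclideanSpace ℝ (Fin n)) :
    mkL v c = ∑ k, c k • v k := rfl

lemma mkL_single {n : ℕ} (v : Fin n → H) (k : Fin n) :
    mkL v (EuclideanSpace.single k (1:ℝ)) = v k := by
  simp [EuclideanSpace.single_apply]

noncomputable def gop {n : ℕ} (v : Fin n → H) :
    EuclideanSpace ℝ (Fin n) →ₗ[ℝ] EuclideanSpace ℝ (Fin n) :=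
  (WithLp.linearEquiv 2 ℝ (Fin n → ℝ)).symm.toLinearMap ∘ₗ
    LinearMap.pi fun l => (innerSL ℝ (v l)).toLinearMap ∘ₗ mkL v

lemma gop_apply {n : ℕ} (v : Fin n → H) (c : EuclideanSpace ℝ (Fin n)) (l : Fin n) :
    gop v c l = ⟪v l, mkL v c⟫ := rfl

lemma gop_inner {n : ℕ} (v : Fin n → H) (c d : EuclideanSpace ℝ (Fin n)) :
    ⟪gop v c, d⟫ = ⟪mkL v c, mkL v d⟫ := by
  rw [PiLp.inner_apply]
  simp only [RCLike.inner_apply, conj_trivial, gop_apply]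
  rw [mkL_apply v d, inner_sum]
  exact Finset.sum_congr rfl fun l _ => by
    rw [real_inner_smul_right, real_inner_comm]

lemma gop_isSymmetric {n : ℕ} (v : Fin n → H) : (gop v).IsSymmetric := by
  intro c d
  rw [gop_inner, real_inner_comm, ← gop_inner, real_inner_comm]

lemma svd_exists {n : ℕ} (w : Fin n → H) :
    ∃ (φ : OrthonormalBasis (Fin n) ℝ (EuclideanSpace ℝ (Fin n))) (α : Fin n → ℝ)
      (ψ : Fin n → H),
      (∀ a, 0 ≤ α a) ∧ (∀ a, ‖ψ a‖ ≤ 1) ∧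
      (∀ a c, ⟪ψ a, ψ c⟫ = if a = c then (if α a = 0 then 0 else 1) else 0) ∧
      (∀ a, mkL w (φ a) = α a • ψ a) := by
  classical
  have hsym := gop_isSymmetric w
  have hn : Module.finrank ℝ (EuclideanSpace ℝ (Fin n)) = n := finrank_euclideanSpace_fin
  haveI : FiniteDimensional ℝ (EuclideanSpace ℝ (Fin n)) := by infer_instance
  set φ := hsym.eigenvectorBasis hn with hφ
  set μ := hsym.eigenvalues hn with hμ
  have happ : ∀ a, gop w (φ a) = μ a • φ a := fun a => hsym.apply_eigenvectorBasis hn a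
  have hLL : ∀ a c, ⟪mkL w (φ a), mkL w (φ c)⟫ = if a = c then μ a else 0 := by
    intro a c
    rw [← gop_inner, happ, real_inner_smul_left, orthonormal_iff_ite.mp φ.orthonormal]
    by_cases h : a = c <;> simp [h]
  set α : Fin n → ℝ := fun a => ‖mkL w (φ a)‖ with hα
  set ψ : Fin n → H := fun a => (α a)⁻¹ • mkL w (φ a) with hψ
  have hμα : ∀ a, μ a = α a ^ 2 := by
    intro a
    have := hLL a a
    rw [if_pos rfl, real_inner_self_eq_norm_sq] at this
    rw [← this]
  refine ⟨φ, α, ψ, fun a => norm_nonneg _, ?_, ?_, ?_⟩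
  · intro a
    rw [hψ]
    rcases eq_or_ne (‖mkL w (φ a)‖) 0 with h | h
    · have h0 : mkL w (φ a) = 0 := norm_eq_zero.mp h
      simp only []
      rw [h0, smul_zero, norm_zero]
      norm_num
    · rw [norm_smul]
      simp only [hα]
      rw [norm_inv, norm_norm, inv_mul_cancel₀ h]
  · intro a c
    rw [hψ]
    simp only [real_inner_smul_left, real_inner_smul_right, hLL]
    by_cases h : a = c
    · subst h
      rcases eq_or_ne (α a) 0 with h0 | h0
      · simp [h0, hμα, if_pos rfl]
      · rw [if_pos rfl, if_pos rfl, if_neg h0, hμα]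
        field_simp
    · simp [h]
  · intro a
    rw [hψ]
    rcases eq_or_ne (α a) 0 with h0 | h0
    · have : mkL w (φ a) = 0 := by
        rw [hα] at h0; exact norm_eq_zero.mp h0
      rw [this, h0]; simp
    · rw [smul_smul, mul_inv_cancel₀ h0, one_smul]

lemma orthonormal_mix {n : ℕ} {x : Fin n → U} (hx : Orthonormal ℝ x)
    (φ : OrthonormalBasis (Fin n) ℝ (EuclideanSpace ℝ (Fin n))) :
    Orthonormal ℝ (fun a => ∑ k, φ a k • x k) := by
  rw [orthonormal_iff_ite]
  intro a c
  have : ⟪(∑ k, φ a k • x k), (∑ l, φ c l • x l)⟫ = ⟪φ a, φ c⟫ := by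
    rw [sum_inner, PiLp.inner_apply]
    refine Finset.sum_congr rfl fun k _ => ?_
    rw [real_inner_smul_left, inner_sum]
    simp only [RCLike.inner_apply, conj_trivial]
    conv_rhs => rw [mul_comm]
    congr 1
    rw [Finset.sum_eq_single k]
    · rw [real_inner_smul_right, orthonormal_iff_ite.mp hx, if_pos rfl, mul_one]
    · intro l _ hl
      rw [real_inner_smul_right, orthonormal_iff_ite.mp hx, if_neg (Ne.symm hl), mul_zero]
    · simp
  rw [this, orthonormal_iff_ite.mp φ.orthonormal]

lemma core [CompleteSpace H] {p q : ℝ} (hpq : Real.HolderConjugate p q)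
    (T : H →L[ℝ] H →L[ℝ] ℝ) (A B : U →L[ℝ] H) {n : ℕ}
    (x y : Fin n → U) (hx : Orthonormal ℝ x) (hy : Orthonormal ℝ y) :
    ENNReal.ofReal (∑ k, T (A (x k)) (B (y k))) ≤
      ENNReal.ofReal ‖T‖ * schattenNorm p A * schattenNorm q B := by
  classical
  by_cases hT0 : T = 0
  · simp [hT0]
  have hτ : 0 < ‖T‖ :=
    lt_of_le_of_ne (ContinuousLinearMap.opNorm_nonneg T)
      (fun h => hT0 (ContinuousLinearMap.opNorm_zero_iff T |>.mp h.symm))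
  have hτ' : ‖T‖ ≠ 0 := hτ.ne'
  obtain ⟨φ, α, ψ, hα, hψn, hψψ, hAsvd⟩ := svd_exists (fun k => A (x k))
  obtain ⟨χ, β, ω, hβ, hωn, hωω, hBsvd⟩ := svd_exists (fun k => B (y k))
  set t : Fin n → Fin n → ℝ := fun a b => T (ψ a) (ω b) with ht
  set g : Fin n → Fin n → ℝ := fun a b => ⟪φ a, χ b⟫ with hg
  set d : Fin n → Fin n → ℝ := fun a b => (g a b ^ 2 + (t a b / ‖T‖) ^ 2) / 2 with hd
  have hd0 : ∀ a b, 0 ≤ d a b := fun a b => by rw [hd]; positivity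
  -- expansion of A (x k) in the SVD bases
  have hAk : ∀ k, A (x k) = ∑ a, (φ a k * α a) • ψ a := by
    intro k
    have h1 : A (x k) = mkL (fun k => A (x k)) (EuclideanSpace.single k 1) :=
      (mkL_single (fun j => A (x j)) k).symm
    have h2 : (EuclideanSpace.single k (1:ℝ)) =
        ∑ a, ⟪φ a, EuclideanSpace.single k (1:ℝ)⟫ • φ a := by
      conv_lhs => rw [← φ.sum_repr (EuclideanSpace.single k 1)]
      exact Finset.sum_congr rfl fun a _ => by rw [φ.repr_apply_apply]
    rw [h1, h2, map_sum]
    refine Finset.sum_congr rfl fun a _ => ?_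
    rw [map_smul, hAsvd, EuclideanSpace.inner_single_right]
    simp [smul_smul]
  have hBk : ∀ k, B (y k) = ∑ b, (χ b k * β b) • ω b := by
    intro k
    have h1 : B (y k) = mkL (fun j => B (y j)) (EuclideanSpace.single k 1) :=
      (mkL_single (fun j => B (y j)) k).symm
    have h2 : (EuclideanSpace.single k (1:ℝ)) =
        ∑ b, ⟪χ b, EuclideanSpace.single k (1:ℝ)⟫ • χ b := by
      conv_lhs => rw [← χ.sum_repr (EuclideanSpace.single k 1)]
      exact Finset.sum_congr rfl fun b _ => by rw [χ.repr_apply_apply]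
    rw [h1, h2, map_sum]
    refine Finset.sum_congr rfl fun b _ => ?_
    rw [map_smul, hBsvd, EuclideanSpace.inner_single_right]
    simp [smul_smul]
  -- main expansion
  have hexp : ∑ k, T (A (x k)) (B (y k)) = ∑ a, ∑ b, g a b * (α a * β b * t a b) := by
    have hk : ∀ k, T (A (x k)) (B (y k)) =
        ∑ a, ∑ b, (φ a k * χ b k) * (α a * β b * t a b) := by
      intro k
      rw [hAk k, hBk k]
      simp only [map_sum, map_smul, ContinuousLinearMap.sum_apply,
        ContinuousLinearMap.smul_apply, smul_eq_mul, Finset.mul_sum, Finset.sum_mul,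
        ht]
      rw [Finset.sum_comm]
      refine Finset.sum_congr rfl fun a _ => Finset.sum_congr rfl fun b _ => ?_
      ring
    rw [Finset.sum_congr rfl fun k _ => hk k]
    rw [Finset.sum_comm]
    refine Finset.sum_congr rfl fun a _ => ?_
    rw [Finset.sum_comm]
    refine Finset.sum_congr rfl fun b _ => ?_
    rw [← Finset.sum_mul]
    first
      | rfl
      | (congr 1
         simp only [hg, PiLp.inner_apply, RCLike.inner_apply, conj_trivial, mul_comm])
  -- pointwise bound
  have hgt : ∀ a b, g a b * (α a * β b * t a b) ≤ ‖T‖ * (α a * β b * d a b) := by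
    intro a b
    have h2 : g a b * (t a b / ‖T‖) ≤ d a b := by
      have h3 := two_mul_le_add_sq (g a b) (t a b / ‖T‖)
      simp only [hd]
      linarith
    have heq : g a b * (α a * β b * t a b) =
        (α a * β b * ‖T‖) * (g a b * (t a b / ‖T‖)) := by field_simp
    rw [heq]
    calc (α a * β b * ‖T‖) * (g a b * (t a b / ‖T‖)) ≤ (α a * β b * ‖T‖) * d a b := by
          apply mul_le_mul_of_nonneg_left h2
          have := hα a; have := hβ b; positivity
      _ = ‖T‖ * (α a * β b * d a b) := by ring
  -- the dual operators
  have hS : ∀ h : H, ∃ z : H, (∀ h', ⟪z, h'⟫ = T h h') ∧ ‖z‖ ≤ ‖T‖ * ‖h‖ := by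
    intro h
    refine ⟨(InnerProductSpace.toDual ℝ H).symm (T h), fun h' =>
      InnerProductSpace.toDual_symm_apply, ?_⟩
    rw [LinearIsometryEquiv.norm_map]
    exact T.le_opNorm h
  have hS' : ∀ h : H, ∃ z : H, (∀ h', ⟪z, h'⟫ = T h' h) ∧ ‖z‖ ≤ ‖T‖ * ‖h‖ := by
    intro h
    refine ⟨(InnerProductSpace.toDual ℝ H).symm (T.flip h), fun h' =>
      InnerProductSpace.toDual_symm_apply, ?_⟩
    rw [LinearIsometryEquiv.norm_map]
    calc ‖T.flip h‖ ≤ ‖T.flip‖ * ‖h‖ := T.flip.le_opNorm h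
      _ = ‖T‖ * ‖h‖ := by rw [ContinuousLinearMap.opNorm_flip]
  -- orthogonality facts for pseudo-Bessel
  have hψ_orth : ∀ a c, a ≠ c → ⟪ψ a, ψ c⟫ = 0 := fun a c hac => by
    rw [hψψ, if_neg hac]
  have hω_orth : ∀ a c, a ≠ c → ⟪ω a, ω c⟫ = 0 := fun a c hac => by
    rw [hωω, if_neg hac]
  have hφ_orth : ∀ a c, a ≠ c → ⟪φ a, φ c⟫ = 0 := fun a c hac => by
    rw [orthonormal_iff_ite.mp φ.orthonormal, if_neg hac]
  have hχ_orth : ∀ a c, a ≠ c → ⟪χ a, χ c⟫ = 0 := fun a c hac => by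
    rw [orthonormal_iff_ite.mp χ.orthonormal, if_neg hac]
  have hφn : ∀ a, ‖φ a‖ ≤ 1 := fun a => le_of_eq (φ.orthonormal.1 a)
  have hχn : ∀ b, ‖χ b‖ ≤ 1 := fun b => le_of_eq (χ.orthonormal.1 b)
  -- row sums
  have hrow : ∀ a, ∑ b, d a b ≤ 1 := by
    intro a
    have h1 : ∑ b, g a b ^ 2 ≤ 1 := by
      have := pseudo_bessel χ hχ_orth hχn (φ a)
      rw [φ.orthonormal.1 a, one_pow] at this
      exact this
    have h2 : ∑ b, (t a b / ‖T‖) ^ 2 ≤ 1 := by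
      obtain ⟨z, hz1, hz2⟩ := hS (ψ a)
      have hb := pseudo_bessel ω hω_orth hωn z
      have hzn : ‖z‖ ^ 2 ≤ ‖T‖ ^ 2 := by
        have : ‖z‖ ≤ ‖T‖ := hz2.trans (by
          calc ‖T‖ * ‖ψ a‖ ≤ ‖T‖ * 1 := by
                exact mul_le_mul_of_nonneg_left (hψn a) (le_of_lt hτ)
            _ = ‖T‖ := mul_one _)
        exact pow_le_pow_left₀ (norm_nonneg z) this 2
      have ht2 : ∑ b, t a b ^ 2 ≤ ‖T‖ ^ 2 := by
        calc ∑ b, t a b ^ 2 = ∑ b, ⟪z, ω b⟫ ^ 2 := by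
              refine Finset.sum_congr rfl fun b _ => ?_
              rw [hz1, ht]
          _ ≤ ‖z‖ ^ 2 := hb
          _ ≤ ‖T‖ ^ 2 := hzn
      have : ∑ b, (t a b / ‖T‖) ^ 2 = (∑ b, t a b ^ 2) / ‖T‖ ^ 2 := by
        rw [Finset.sum_div]
        exact Finset.sum_congr rfl fun b _ => by rw [div_pow]
      rw [this, div_le_one (by positivity)]
      exact ht2
    simp only [hd]
    rw [← Finset.sum_div, Finset.sum_add_distrib]
    linarith
  -- column sums
  have hcol : ∀ b, ∑ a, d a b ≤ 1 := by
    intro b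
    have h1 : ∑ a, g a b ^ 2 ≤ 1 := by
      have hb := pseudo_bessel φ hφ_orth hφn (χ b)
      rw [χ.orthonormal.1 b, one_pow] at hb
      calc ∑ a, g a b ^ 2 = ∑ a, ⟪χ b, φ a⟫ ^ 2 := by
            refine Finset.sum_congr rfl fun a _ => ?_
            rw [hg]; simp only; rw [real_inner_comm]
        _ ≤ 1 := hb
    have h2 : ∑ a, (t a b / ‖T‖) ^ 2 ≤ 1 := by
      obtain ⟨z, hz1, hz2⟩ := hS' (ω b)
      have hb := pseudo_bessel ψ hψ_orth hψn z
      have hzn : ‖z‖ ^ 2 ≤ ‖T‖ ^ 2 := by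
        have : ‖z‖ ≤ ‖T‖ := hz2.trans (by
          calc ‖T‖ * ‖ω b‖ ≤ ‖T‖ * 1 := by
                exact mul_le_mul_of_nonneg_left (hωn b) (le_of_lt hτ)
            _ = ‖T‖ := mul_one _)
        exact pow_le_pow_left₀ (norm_nonneg z) this 2
      have ht2 : ∑ a, t a b ^ 2 ≤ ‖T‖ ^ 2 := by
        calc ∑ a, t a b ^ 2 = ∑ a, ⟪z, ψ a⟫ ^ 2 := by
              refine Finset.sum_congr rfl fun a _ => ?_
              rw [hz1, ht]
          _ ≤ ‖z‖ ^ 2 := hb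
          _ ≤ ‖T‖ ^ 2 := hzn
      have : ∑ a, (t a b / ‖T‖) ^ 2 = (∑ a, t a b ^ 2) / ‖T‖ ^ 2 := by
        rw [Finset.sum_div]
        exact Finset.sum_congr rfl fun a _ => by rw [div_pow]
      rw [this, div_le_one (by positivity)]
      exact ht2
    simp only [hd]
    rw [← Finset.sum_div, Finset.sum_add_distrib]
    linarith
  -- Hölder
  set P := (∑ a, α a ^ p) ^ (1/p) with hP
  set Q := (∑ b, β b ^ q) ^ (1/q) with hQ
  have hP0 : 0 ≤ P := Real.rpow_nonneg (Finset.sum_nonneg fun a _ =>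
    Real.rpow_nonneg (hα a) p) _
  have hQ0 : 0 ≤ Q := Real.rpow_nonneg (Finset.sum_nonneg fun b _ =>
    Real.rpow_nonneg (hβ b) q) _
  have hpow : ∀ (c : ℝ), 0 ≤ c → ∀ (e : ℝ), e ≠ 0 → (c ^ (1/e)) ^ e = c := by
    intro c hc e he
    rw [← Real.rpow_mul hc, one_div, inv_mul_cancel₀ he, Real.rpow_one]
  have hkey : ∑ a, ∑ b, α a * β b * d a b ≤ P * Q := by
    have hconv : (∑ z : Fin n × Fin n, α z.1 * β z.2 * d z.1 z.2) =
        ∑ a, ∑ b, α a * β b * d a b :=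
      Fintype.sum_prod_type (f := fun z : Fin n × Fin n => α z.1 * β z.2 * d z.1 z.2)
    rw [← hconv]
    have h1 : ∀ z : Fin n × Fin n, α z.1 * β z.2 * d z.1 z.2 =
        (α z.1 * d z.1 z.2 ^ (1/p)) * (β z.2 * d z.1 z.2 ^ (1/q)) := by
      intro z
      have hdd : d z.1 z.2 ^ (1/p) * d z.1 z.2 ^ (1/q) = d z.1 z.2 := by
        rw [← Real.rpow_add' (hd0 _ _) (by
          rw [one_div, one_div, hpq.inv_add_inv_eq_one]; norm_num)]
        rw [one_div, one_div, hpq.inv_add_inv_eq_one, Real.rpow_one]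
      calc α z.1 * β z.2 * d z.1 z.2 =
          α z.1 * β z.2 * (d z.1 z.2 ^ (1/p) * d z.1 z.2 ^ (1/q)) := by rw [hdd]
        _ = (α z.1 * d z.1 z.2 ^ (1/p)) * (β z.2 * d z.1 z.2 ^ (1/q)) := by ring
    rw [Finset.sum_congr rfl fun z _ => h1 z]
    have h2 := Real.inner_le_Lp_mul_Lq_of_nonneg (s := Finset.univ) hpq
      (f := fun z : Fin n × Fin n => α z.1 * d z.1 z.2 ^ (1/p))
      (g := fun z : Fin n × Fin n => β z.2 * d z.1 z.2 ^ (1/q))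
      (fun z _ => mul_nonneg (hα _) (Real.rpow_nonneg (hd0 _ _) _))
      (fun z _ => mul_nonneg (hβ _) (Real.rpow_nonneg (hd0 _ _) _))
    refine h2.trans ?_
    have hsumP : ∑ z : Fin n × Fin n, (α z.1 * d z.1 z.2 ^ (1/p)) ^ p ≤ ∑ a, α a ^ p := by
      have heq : ∀ z : Fin n × Fin n, (α z.1 * d z.1 z.2 ^ (1/p)) ^ p =
          α z.1 ^ p * d z.1 z.2 := by
        intro z
        rw [Real.mul_rpow (hα _) (Real.rpow_nonneg (hd0 _ _) _),
          hpow _ (hd0 _ _) p hpq.pos.ne']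
      rw [Finset.sum_congr rfl fun z _ => heq z]
      have hconv2 : (∑ z : Fin n × Fin n, α z.1 ^ p * d z.1 z.2) =
          ∑ a, ∑ b, α a ^ p * d a b :=
        Fintype.sum_prod_type (f := fun z : Fin n × Fin n => α z.1 ^ p * d z.1 z.2)
      rw [hconv2]
      calc ∑ a, ∑ b, α a ^ p * d a b = ∑ a, α a ^ p * ∑ b, d a b := by
            exact Finset.sum_congr rfl fun a _ => (Finset.mul_sum _ _ _).symm
        _ ≤ ∑ a, α a ^ p * 1 := Finset.sum_le_sum fun a _ =>
            mul_le_mul_of_nonneg_left (hrow a) (Real.rpow_nonneg (hα a) p)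
        _ = ∑ a, α a ^ p := by simp
    have hsumQ : ∑ z : Fin n × Fin n, (β z.2 * d z.1 z.2 ^ (1/q)) ^ q ≤ ∑ b, β b ^ q := by
      have heq : ∀ z : Fin n × Fin n, (β z.2 * d z.1 z.2 ^ (1/q)) ^ q =
          β z.2 ^ q * d z.1 z.2 := by
        intro z
        rw [Real.mul_rpow (hβ _) (Real.rpow_nonneg (hd0 _ _) _),
          hpow _ (hd0 _ _) q hpq.symm.pos.ne']
      rw [Finset.sum_congr rfl fun z _ => heq z]
      have hconv2 : (∑ z : Fin n × Fin n, β z.2 ^ q * d z.1 z.2) =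
          ∑ a, ∑ b, β b ^ q * d a b :=
        Fintype.sum_prod_type (f := fun z : Fin n × Fin n => β z.2 ^ q * d z.1 z.2)
      rw [hconv2, Finset.sum_comm]
      calc ∑ b, ∑ a, β b ^ q * d a b = ∑ b, β b ^ q * ∑ a, d a b := by
            exact Finset.sum_congr rfl fun b _ => (Finset.mul_sum _ _ _).symm
        _ ≤ ∑ b, β b ^ q * 1 := Finset.sum_le_sum fun b _ =>
            mul_le_mul_of_nonneg_left (hcol b) (Real.rpow_nonneg (hβ b) q)
        _ = ∑ b, β b ^ q := by simp
    have hmono1 : (∑ z : Fin n × Fin n, (α z.1 * d z.1 z.2 ^ (1/p)) ^ p) ^ (1/p) ≤ P := by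
      rw [hP]
      apply Real.rpow_le_rpow (Finset.sum_nonneg fun z _ =>
        Real.rpow_nonneg (mul_nonneg (hα _) (Real.rpow_nonneg (hd0 _ _) _)) _) hsumP
      exact (one_div_pos.mpr hpq.pos).le
    have hmono2 : (∑ z : Fin n × Fin n, (β z.2 * d z.1 z.2 ^ (1/q)) ^ q) ^ (1/q) ≤ Q := by
      rw [hQ]
      apply Real.rpow_le_rpow (Finset.sum_nonneg fun z _ =>
        Real.rpow_nonneg (mul_nonneg (hβ _) (Real.rpow_nonneg (hd0 _ _) _)) _) hsumQ
      exact (one_div_pos.mpr hpq.symm.pos).le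
    exact mul_le_mul hmono1 hmono2 (Real.rpow_nonneg (Finset.sum_nonneg fun z _ =>
      Real.rpow_nonneg (mul_nonneg (hβ _) (Real.rpow_nonneg (hd0 _ _) _)) _) _) hP0
  -- final real bound
  have hfinal : ∑ k, T (A (x k)) (B (y k)) ≤ ‖T‖ * (P * Q) := by
    rw [hexp]
    calc ∑ a, ∑ b, g a b * (α a * β b * t a b)
        ≤ ∑ a, ∑ b, ‖T‖ * (α a * β b * d a b) :=
          Finset.sum_le_sum fun a _ => Finset.sum_le_sum fun b _ => hgt a b
      _ = ‖T‖ * ∑ a, ∑ b, α a * β b * d a b := by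
          rw [Finset.mul_sum]
          exact Finset.sum_congr rfl fun a _ => (Finset.mul_sum _ _ _).symm
      _ ≤ ‖T‖ * (P * Q) := mul_le_mul_of_nonneg_left hkey (le_of_lt hτ)
  -- Schatten bounds for each factor
  have hPA : ENNReal.ofReal P ≤ schattenNorm p A := by
    refine side_bound hpq.pos A (fun a => ∑ k, φ a k • x k) (orthonormal_mix hx φ)
      α ψ hα ?_ hψψ
    intro a
    have h := hAsvd a
    rw [mkL_apply] at h
    rw [map_sum]
    simp only [map_smul]
    exact h
  have hQB : ENNReal.ofReal Q ≤ schattenNorm q B := by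
    refine side_bound hpq.symm.pos B (fun b => ∑ k, χ b k • y k) (orthonormal_mix hy χ)
      β ω hβ ?_ hωω
    intro b
    have h := hBsvd b
    rw [mkL_apply] at h
    rw [map_sum]
    simp only [map_smul]
    exact h
  calc ENNReal.ofReal (∑ k, T (A (x k)) (B (y k)))
      ≤ ENNReal.ofReal (‖T‖ * (P * Q)) := ENNReal.ofReal_le_ofReal hfinal
    _ = ENNReal.ofReal ‖T‖ * (ENNReal.ofReal P * ENNReal.ofReal Q) := by
        rw [ENNReal.ofReal_mul (le_of_lt hτ), ENNReal.ofReal_mul hP0]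
    _ ≤ ENNReal.ofReal ‖T‖ * (schattenNorm p A * schattenNorm q B) :=
        by gcongr
    _ = ENNReal.ofReal ‖T‖ * schattenNorm p A * schattenNorm q B := (mul_assoc _ _ _).symm

end SchattenAux

/-- Hölder inequality for Schatten classes: if `T` is a continuous bilinear form on the
separable real Hilbert space `H`, `A ∈ L_{1+r}(U,H)` and `B ∈ L_{1+1/r}(U,H)`, and `𝕌` is an
orthonormal basis of `U`, then `Σ_{u ∈ 𝕌} |T(Au, Bu)| ≤ ‖T‖ ‖A‖_{S_{1+r}} ‖B‖_{S_{1+1/r}}`. -/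
theorem stmt_9 {U H ι : Type*}
    [NormedAddCommGroup U] [InnerProductSpace ℝ U] [CompleteSpace U]
    [NormedAddCommGroup H] [InnerProductSpace ℝ H] [CompleteSpace H]
    [Countable ι] (b : HilbertBasis ι ℝ U)
    (r : ℝ) (hr : 0 < r)
    (T : H →L[ℝ] H →L[ℝ] ℝ) (A B : U →L[ℝ] H)
    (hA : schattenNorm (1 + r) A ≠ ⊤) (hB : schattenNorm (1 + 1/r) B ≠ ⊤) :
    ∑' u : ι, ENNReal.ofReal |T (A (b u)) (B (b u))| ≤
      ENNReal.ofReal ‖T‖ * schattenNorm (1 + r) A * schattenNorm (1 + 1/r) B := by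
  classical
  have hpq : Real.HolderConjugate (1 + r) (1 + 1/r) := by
    rw [Real.holderConjugate_iff]
    constructor
    · linarith
    · have hr' : r ≠ 0 := hr.ne'
      field_simp
      ring
  rw [ENNReal.tsum_eq_iSup_sum]
  refine iSup_le fun s => ?_
  set v : Fin s.card → U := fun k => b ((s.equivFin.symm k : ι)) with hv
  have hv_inj : Function.Injective (fun k => (s.equivFin.symm k : ι)) :=
    Subtype.val_injective.comp s.equivFin.symm.injective
  have hv_on : Orthonormal ℝ v := b.orthonormal.comp _ hv_inj
  set σ : Fin s.card → ℝ :=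
    fun k => if T (A (v k)) (B (v k)) < 0 then (-1 : ℝ) else 1 with hσ
  set x : Fin s.card → U := fun k => σ k • v k with hxdef
  have hσ_sq : ∀ k, σ k * σ k = 1 := by
    intro k
    rw [hσ]
    by_cases h : T (A (v k)) (B (v k)) < 0 <;> simp [h]
  have hx_on : Orthonormal ℝ x := by
    rw [orthonormal_iff_ite]
    intro k l
    rw [hxdef]
    simp only [real_inner_smul_left, real_inner_smul_right]
    rw [orthonormal_iff_ite.mp hv_on]
    by_cases h : k = l
    · subst h; simp [hσ_sq k]
    · simp [h]
  have habs : ∀ k, |T (A (v k)) (B (v k))| = T (A (x k)) (B (v k)) := by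
    intro k
    rw [hxdef]
    simp only [map_smul, ContinuousLinearMap.smul_apply, smul_eq_mul, hσ]
    by_cases h : T (A (v k)) (B (v k)) < 0
    · rw [if_pos h, abs_of_neg h]; ring
    · rw [if_neg h, abs_of_nonneg (not_lt.mp h), one_mul]
  have hsum : ∑ u ∈ s, ENNReal.ofReal |T (A (b u)) (B (b u))| =
      ENNReal.ofReal (∑ k, T (A (x k)) (B (v k))) := by
    rw [← Finset.sum_coe_sort s (fun u => ENNReal.ofReal |T (A (b u)) (B (b u))|)]
    rw [← Equiv.sum_comp s.equivFin.symm
      (fun u : s => ENNReal.ofReal |T (A (b (u : ι))) (B (b (u : ι)))|)]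
    rw [ENNReal.ofReal_sum_of_nonneg (fun k _ => by
      rw [← habs k]; exact abs_nonneg _)]
    exact Finset.sum_congr rfl fun k _ => by rw [← habs k]
  rw [hsum]
  exact SchattenAux.core hpq T A B x v hx_on hv_on
end

section
/- In the setting of the abstract wave equation, let 𝚲 be the diagonal operator on 𝐇_0 acting as multiplication by |λ_h|^{1/2} in each coordinate. Then for every α ∈ [0,1] and t > 0, t^(-α) ‖𝚲^(-α)(Id - e^{t𝐀})‖_{L(𝐇_0)} ≤ √2 · sup_{s>0} s^(-α)|1 - e^{is}| ≤ 2^{3/2}, where e^{t𝐀} is the wave semigroup. -/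
open Real Complex

open scoped RealInnerProductSpace

lemma sq_abs_one_sub_exp (s : ℝ) :
    (‖1 - Complex.exp (s * Complex.I)‖)^2
      = (1 - Real.cos s)^2 + (Real.sin s)^2 := by
  rw [Complex.sq_norm, Complex.normSq_apply]
  simp only [Complex.sub_re, Complex.sub_im, Complex.one_re, Complex.one_im,
    Complex.exp_ofReal_mul_I_re, Complex.exp_ofReal_mul_I_im]
  ring

lemma abs_one_sub_exp_le_two (s : ℝ) :
    ‖1 - Complex.exp (s * Complex.I)‖ ≤ 2 := by
  calc ‖1 - Complex.exp (s * Complex.I)‖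
      = ‖(1 : ℂ) - Complex.exp (s * Complex.I)‖ := rfl
    _ ≤ ‖(1 : ℂ)‖ + ‖Complex.exp (s * Complex.I)‖ := norm_sub_le _ _
    _ = 2 := by
        rw [norm_one, Complex.norm_exp_ofReal_mul_I]
        norm_num

lemma abs_one_sub_exp_le_self {s : ℝ} (hs : 0 < s) :
    ‖1 - Complex.exp (s * Complex.I)‖ ≤ s := by
  have hsq : (‖1 - Complex.exp (s * Complex.I)‖)^2 ≤ s^2 := by
    rw [sq_abs_one_sub_exp]
    rcases le_total s 2 with h2 | h2
    · -- use 1 - cos s = 2 sin(s/2)^2 ≤ 2 (s/2)^2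
      have hhalf : Real.cos s = 2 * Real.cos (s/2)^2 - 1 := by
        have := Real.cos_two_mul (s/2)
        rwa [show 2 * (s/2) = s by ring] at this
      have hpyth := Real.sin_sq_add_cos_sq (s/2)
      have hsin_nonneg : 0 ≤ Real.sin (s/2) := by
        apply Real.sin_nonneg_of_nonneg_of_le_pi (by linarith)
        nlinarith [Real.pi_gt_three]
      have hsin_le : Real.sin (s/2) ≤ s/2 := Real.sin_le (by linarith)
      have hp := Real.sin_sq_add_cos_sq s
      nlinarith [hsin_le, hsin_nonneg]
    · have hp := Real.sin_sq_add_cos_sq s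
      have := Real.neg_one_le_cos s
      nlinarith
  nlinarith [norm_nonneg (1 - Complex.exp (s * Complex.I)), hs]

lemma member_le_two {α : ℝ} (hα0 : 0 ≤ α) (hα1 : α ≤ 1) {s : ℝ} (hs : 0 < s) :
    s ^ (-α) * ‖1 - Complex.exp (s * Complex.I)‖ ≤ 2 := by
  rcases le_total s 1 with h1 | h1
  · calc s ^ (-α) * ‖1 - Complex.exp (s * Complex.I)‖
        ≤ s ^ (-α) * s :=
          mul_le_mul_of_nonneg_left (abs_one_sub_exp_le_self hs)
            (Real.rpow_nonneg hs.le _)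
      _ = s ^ (-α + 1) := by rw [Real.rpow_add hs, Real.rpow_one]
      _ ≤ 1 := Real.rpow_le_one hs.le h1 (by linarith)
      _ ≤ 2 := by norm_num
  · have h3 : s ^ (-α) ≤ 1 := Real.rpow_le_one_of_one_le_of_nonpos h1 (by linarith)
    calc s ^ (-α) * ‖1 - Complex.exp (s * Complex.I)‖
        ≤ 1 * 2 := mul_le_mul h3 (abs_one_sub_exp_le_two s)
          (norm_nonneg _) zero_le_one
      _ = 2 := one_mul 2

/-- Hölder-type bound for the wave group: for `α ∈ [0,1]` and `t > 0`,
`t^(-α) ‖𝚲^(-α)(Id - e^{t𝐀})‖_{L(𝐇₀)} ≤ √2 · sup_{s>0} s^(-α)|1 - e^{is}| ≤ 2^{3/2}`.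

The space `𝐇₀` is modelled by a real Hilbert space `E` with Hilbert basis indexed by
`ι × Fin 2` (one block per spectral mode, with `μ i = |λ_i|^{1/2} > 0`); the operator
`D = 𝚲^(-α)(Id - e^{t𝐀})` acts blockwise as `(μ i)^(-α)` times `Id₂` minus the rotation
by the angle `t μ i`. -/
theorem stmt_12 {E ι : Type*} [NormedAddCommGroup E] [InnerProductSpace ℝ E]
    [CompleteSpace E]
    (b : HilbertBasis (ι × Fin 2) ℝ E) (μ : ι → ℝ) (hμ : ∀ i, 0 < μ i)
    (α t : ℝ) (hα : α ∈ Set.Icc (0:ℝ) 1) (ht : 0 < t)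
    (D : E →L[ℝ] E)
    (hD0 : ∀ i : ι, D (b (i, 0)) =
      (μ i) ^ (-α) • ((1 - Real.cos (t * μ i)) • (b (i, 0) : E)
        + Real.sin (t * μ i) • (b (i, 1) : E)))
    (hD1 : ∀ i : ι, D (b (i, 1)) =
      (μ i) ^ (-α) • ((-Real.sin (t * μ i)) • (b (i, 0) : E)
        + (1 - Real.cos (t * μ i)) • (b (i, 1) : E))) :
    t ^ (-α) * ‖D‖ ≤
        Real.sqrt 2 *
          sSup {x : ℝ | ∃ s : ℝ, 0 < s ∧
            x = s ^ (-α) * ‖1 - Complex.exp (s * Complex.I)‖} ∧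
      Real.sqrt 2 *
          sSup {x : ℝ | ∃ s : ℝ, 0 < s ∧
            x = s ^ (-α) * ‖1 - Complex.exp (s * Complex.I)‖} ≤
        2 ^ ((3:ℝ)/2) := by
  classical
  obtain ⟨hα0, hα1⟩ := hα
  have h01 : ∀ k : Fin 2, k = 0 ∨ k = 1 := by decide
  set Φ : Set ℝ := {x : ℝ | ∃ s : ℝ, 0 < s ∧
      x = s ^ (-α) * ‖1 - Complex.exp (s * Complex.I)‖} with hΦ
  set S := sSup Φ with hSdef
  have hbdd : BddAbove Φ := by
    refine ⟨2, fun x hx => ?_⟩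
    obtain ⟨s, hs, rfl⟩ := hx
    exact member_le_two hα0 hα1 hs
  have hmem1 : (1:ℝ) ^ (-α) * ‖1 - Complex.exp ((1:ℝ) * Complex.I)‖ ∈ Φ :=
    ⟨1, one_pos, rfl⟩
  have hS0 : 0 ≤ S := by
    refine le_trans ?_ (le_csSup hbdd hmem1)
    exact mul_nonneg (Real.rpow_nonneg zero_le_one _) (norm_nonneg _)
  have hS2 : S ≤ 2 := by
    apply Real.sSup_le _ (by norm_num)
    rintro x ⟨s, hs, rfl⟩
    exact member_le_two hα0 hα1 hs
  set c : ℝ := t ^ α * S with hcdef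
  have hc0 : 0 ≤ c := mul_nonneg (Real.rpow_nonneg ht.le _) hS0
  -- key per-block bound
  have hkey : ∀ i, ((μ i) ^ (-α))^2 * ((1 - Real.cos (t * μ i))^2 + (Real.sin (t * μ i))^2)
      ≤ c^2 := by
    intro i
    have hθ : 0 < t * μ i := mul_pos ht (hμ i)
    have hmem : (t * μ i) ^ (-α) * ‖1 - Complex.exp ((↑(t * μ i) : ℂ) * Complex.I)‖ ∈ Φ :=
      ⟨t * μ i, hθ, rfl⟩
    have h1 : (t * μ i) ^ (-α) * ‖1 - Complex.exp ((↑(t * μ i) : ℂ) * Complex.I)‖ ≤ S :=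
      le_csSup hbdd hmem
    have hμα : (μ i) ^ (-α) = t ^ α * (t * μ i) ^ (-α) := by
      rw [Real.mul_rpow ht.le (hμ i).le, ← mul_assoc, ← Real.rpow_add ht]
      simp
    have h2 : (μ i) ^ (-α) * ‖1 - Complex.exp ((↑(t * μ i) : ℂ) * Complex.I)‖ ≤ c := by
      rw [hμα, mul_assoc]
      exact mul_le_mul_of_nonneg_left h1 (Real.rpow_nonneg ht.le _)
    have h3 : 0 ≤ (μ i) ^ (-α) * ‖1 - Complex.exp ((↑(t * μ i) : ℂ) * Complex.I)‖ :=
      mul_nonneg (Real.rpow_nonneg (hμ i).le _) (norm_nonneg _)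
    calc ((μ i) ^ (-α))^2 * ((1 - Real.cos (t * μ i))^2 + (Real.sin (t * μ i))^2)
        = ((μ i) ^ (-α) * ‖1 - Complex.exp ((↑(t * μ i) : ℂ) * Complex.I)‖)^2 := by
          rw [mul_pow, sq_abs_one_sub_exp]
      _ ≤ c^2 := by nlinarith
  -- operator norm bound
  have hDnorm : ‖D‖ ≤ c := by
    refine D.opNorm_le_bound hc0 (fun x => ?_)
    have hon := orthonormal_iff_ite.mp b.orthonormal
    have hDx : HasSum (fun j => ⟪(b j : E), x⟫ • D (b j)) (D x) := by
      have h := (b.hasSum_repr x).mapL D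
      simpa [b.repr_apply_apply, map_smul] using h
    have hDxsum : ∀ p : ι × Fin 2,
        HasSum (fun j => ⟪(b j : E), x⟫ * ⟪(b p : E), D (b j)⟫) ⟪(b p : E), D x⟫ := by
      intro p
      have h := hDx.mapL (innerSL ℝ (b p))
      simpa [inner_smul_right] using h
    have hentry : ∀ p j : ι × Fin 2, p.1 ≠ j.1 → ⟪(b p : E), D (b j)⟫ = 0 := by
      rintro p ⟨j1, j2⟩ hne
      rcases h01 j2 with rfl | rfl
      · rw [hD0]
        simp [inner_smul_right, inner_add_right, hon, Prod.ext_iff, hne]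
      · rw [hD1]
        simp [inner_smul_right, inner_add_right, hon, Prod.ext_iff, hne]
    have hside : ∀ (i : ι) (k : Fin 2), ∀ j ∉ ({(i, 0), (i, 1)} : Finset (ι × Fin 2)),
        ⟪(b j : E), x⟫ * ⟪(b (i, k) : E), D (b j)⟫ = 0 := by
      intro i k j hj
      obtain ⟨j1, j2⟩ := j
      have hne : i ≠ j1 := by
        rintro rfl
        rcases h01 j2 with rfl | rfl <;> simp at hj
      rw [hentry (i, k) (j1, j2) hne, mul_zero]
    have hv00 : ∀ i : ι, ⟪(b (i, 0) : E), D (b (i, 0))⟫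
        = (μ i) ^ (-α) * (1 - Real.cos (t * μ i)) := by
      intro i; rw [hD0]
      simp [inner_smul_right, inner_add_right, hon, b.orthonormal.1]
    have hv01 : ∀ i : ι, ⟪(b (i, 0) : E), D (b (i, 1))⟫
        = (μ i) ^ (-α) * (-Real.sin (t * μ i)) := by
      intro i; rw [hD1]
      simp [inner_smul_right, inner_add_right, hon, b.orthonormal.1]
    have hv10 : ∀ i : ι, ⟪(b (i, 1) : E), D (b (i, 0))⟫
        = (μ i) ^ (-α) * Real.sin (t * μ i) := by
      intro i; rw [hD0]
      simp [inner_smul_right, inner_add_right, hon, b.orthonormal.1]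
    have hv11 : ∀ i : ι, ⟪(b (i, 1) : E), D (b (i, 1))⟫
        = (μ i) ^ (-α) * (1 - Real.cos (t * μ i)) := by
      intro i; rw [hD1]
      simp [inner_smul_right, inner_add_right, hon, b.orthonormal.1]
    have key0 : ∀ i : ι, ⟪(b (i, 0) : E), D x⟫
        = (μ i) ^ (-α) * ((1 - Real.cos (t * μ i)) * ⟪(b (i, 0) : E), x⟫
            - Real.sin (t * μ i) * ⟪(b (i, 1) : E), x⟫) := by
      intro i
      rw [← (hDxsum (i, 0)).tsum_eq, tsum_eq_sum (hside i 0),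
        Finset.sum_pair (by simp), hv00, hv01]
      ring
    have key1 : ∀ i : ι, ⟪(b (i, 1) : E), D x⟫
        = (μ i) ^ (-α) * (Real.sin (t * μ i) * ⟪(b (i, 0) : E), x⟫
            + (1 - Real.cos (t * μ i)) * ⟪(b (i, 1) : E), x⟫) := by
      intro i
      rw [← (hDxsum (i, 1)).tsum_eq, tsum_eq_sum (hside i 1),
        Finset.sum_pair (by simp), hv10, hv11]
      ring
    -- Parseval
    have hPx : HasSum (fun j => ⟪(b j : E), x⟫^2) (‖x‖^2) := by
      have h := b.hasSum_inner_mul_inner x x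
      rw [real_inner_self_eq_norm_sq] at h
      convert h using 1
      · rfl
      funext j
      rw [sq, real_inner_comm]
    have hPD : HasSum (fun j => ⟪(b j : E), D x⟫^2) (‖D x‖^2) := by
      have h := b.hasSum_inner_mul_inner (D x) (D x)
      rw [real_inner_self_eq_norm_sq] at h
      convert h using 1
      · rfl
      funext j
      rw [sq, real_inner_comm]
    have hFx : HasSum (fun i : ι => ⟪(b (i, 0) : E), x⟫^2 + ⟪(b (i, 1) : E), x⟫^2)
        (‖x‖^2) := by
      refine hPx.prod_fiberwise (fun i => ?_)
      simpa [Fin.sum_univ_two] using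
        (hasSum_fintype (fun k : Fin 2 => ⟪(b (i, k) : E), x⟫^2))
    have hFD : HasSum (fun i : ι => ⟪(b (i, 0) : E), D x⟫^2 + ⟪(b (i, 1) : E), D x⟫^2)
        (‖D x‖^2) := by
      refine hPD.prod_fiberwise (fun i => ?_)
      simpa [Fin.sum_univ_two] using
        (hasSum_fintype (fun k : Fin 2 => ⟪(b (i, k) : E), D x⟫^2))
    have hpoint : ∀ i : ι, ⟪(b (i, 0) : E), D x⟫^2 + ⟪(b (i, 1) : E), D x⟫^2
        ≤ c^2 * (⟪(b (i, 0) : E), x⟫^2 + ⟪(b (i, 1) : E), x⟫^2) := by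
      intro i
      rw [key0 i, key1 i]
      have hfs : (0:ℝ) ≤ ⟪(b (i, 0) : E), x⟫^2 + ⟪(b (i, 1) : E), x⟫^2 := by positivity
      calc ((μ i) ^ (-α) * ((1 - Real.cos (t * μ i)) * ⟪(b (i, 0) : E), x⟫
            - Real.sin (t * μ i) * ⟪(b (i, 1) : E), x⟫))^2
          + ((μ i) ^ (-α) * (Real.sin (t * μ i) * ⟪(b (i, 0) : E), x⟫
            + (1 - Real.cos (t * μ i)) * ⟪(b (i, 1) : E), x⟫))^2
          = (((μ i) ^ (-α))^2 * ((1 - Real.cos (t * μ i))^2 + (Real.sin (t * μ i))^2))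
              * (⟪(b (i, 0) : E), x⟫^2 + ⟪(b (i, 1) : E), x⟫^2) := by ring
        _ ≤ c^2 * (⟪(b (i, 0) : E), x⟫^2 + ⟪(b (i, 1) : E), x⟫^2) :=
            mul_le_mul_of_nonneg_right (hkey i) hfs
    have hsq : ‖D x‖^2 ≤ c^2 * ‖x‖^2 := hasSum_le hpoint hFD (hFx.mul_left (c^2))
    nlinarith [norm_nonneg (D x), norm_nonneg x, mul_nonneg hc0 (norm_nonneg x)]
  constructor
  · have h1 : t ^ (-α) * ‖D‖ ≤ t ^ (-α) * c :=
      mul_le_mul_of_nonneg_left hDnorm (Real.rpow_nonneg ht.le _)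
    have h2 : t ^ (-α) * c = S := by
      rw [hcdef, ← mul_assoc, ← Real.rpow_add ht]
      simp
    have h3 : S ≤ Real.sqrt 2 * S := by
      nlinarith [Real.sq_sqrt (by norm_num : (0:ℝ) ≤ 2), Real.sqrt_nonneg 2, hS0,
        Real.one_le_sqrt.mpr (by norm_num : (1:ℝ) ≤ 2)]
    calc t ^ (-α) * ‖D‖ ≤ t ^ (-α) * c := h1
      _ = S := h2
      _ ≤ Real.sqrt 2 * S := h3
  · have h4 : Real.sqrt 2 * S ≤ Real.sqrt 2 * 2 :=
      mul_le_mul_of_nonneg_left hS2 (Real.sqrt_nonneg 2)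
    have h5 : Real.sqrt 2 * 2 = 2 ^ ((3:ℝ)/2) := by
      rw [show (3:ℝ)/2 = 1/2 + 1 by norm_num, Real.rpow_add (by norm_num : (0:ℝ) < 2),
        Real.rpow_one, ← Real.sqrt_eq_rpow]
    rw [← h5]
    exact h4
end
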